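/- Let X₁, X₂, … be i.i.d. real random variables with mean μ > 0 satisfying the Chernoff bound P(X̄_u − μ ≤ −a) ≤ exp(−u a²/2) for all a > 0, where X̄_u is the empirical mean of the first u samples. Then ∑_{u=1}^∞ P(X̄_u < 2√(log u / u)) ≤ 3 + (32/μ²)·log(16/μ²) + 8/μ². -/

import Mathlib

open MeasureTheory Real

private lemma log_le_mul_self {c u : ℝ} (hc : 0 < c) (hu : 0 < u)
    (h : 2 / c * Real.log (1 / c) ≤ u) : Real.log u ≤ c * u := by
  have hcu : Real.log (1 / c) ≤ c * u / 2 := by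
    have h' := mul_le_mul_of_nonneg_right h hc.le
    have he : 2 / c * Real.log (1 / c) * c = 2 * Real.log (1 / c) := by
      field_simp
    rw [he] at h'
    linarith
  have h1 : Real.log (u * c / 2) ≤ u * c / 2 - 1 :=
    Real.log_le_sub_one_of_pos (by positivity)
  have h2 : Real.log u = Real.log (2 / c) + Real.log (u * c / 2) := by
    rw [← Real.log_mul (by positivity) (by positivity)]
    congr 1
    field_simp
  have h3 : Real.log (2 / c) = Real.log 2 + Real.log (1 / c) := by
    rw [← Real.log_mul (by norm_num) (by positivity)]
    congr 1
    ring
  have hlog2 : Real.log 2 ≤ 1 := by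
    have := Real.log_le_sub_one_of_pos (by norm_num : (0:ℝ) < 2)
    linarith
  nlinarith [h1, h2, h3, hcu, hlog2]

set_option maxHeartbeats 1000000 in
theorem good_arm_inactive_prob_sum_bound
    {Ω : Type*} [MeasurableSpace Ω] (P : Measure Ω) [IsProbabilityMeasure P]
    (Xbar : ℕ → Ω → ℝ) (μ : ℝ) (hμ : 0 < μ)
    (hchernoff : ∀ u : ℕ, 1 ≤ u → ∀ a : ℝ, 0 < a →
      P {ω | Xbar u ω - μ ≤ -a} ≤ ENNReal.ofReal (Real.exp (-(u : ℝ) * a ^ 2 / 2))) :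
    (∑' u : ℕ,
        P {ω | Xbar (u + 1) ω < 2 * Real.sqrt (Real.log (u + 1 : ℕ) / (u + 1 : ℕ))})
      ≤ ENNReal.ofReal (3 + 32 / μ ^ 2 * Real.log (16 / μ ^ 2) + 8 / μ ^ 2) := by
  have hμ2 : (0:ℝ) < μ ^ 2 := by positivity
  set x : ℝ := μ ^ 2 / 8 with hxdef
  have hx0 : 0 < x := by positivity
  set t0 : ℝ := 32 / μ ^ 2 * Real.log (16 / μ ^ 2) with ht0
  set n0 : ℕ := ⌈t0⌉₊ + 1 with hn0
  set f : ℕ → ENNReal := fun u =>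
    P {ω | Xbar (u + 1) ω < 2 * Real.sqrt (Real.log (u + 1 : ℕ) / (u + 1 : ℕ))} with hf
  set r : ℝ := Real.exp (-x) with hr
  have hr0 : 0 ≤ r := (Real.exp_pos _).le
  have hr1 : r < 1 := Real.exp_lt_one_iff.mpr (by linarith)
  -- tail term bound
  have hterm : ∀ j : ℕ, f (j + n0) ≤ ENNReal.ofReal (r ^ (j + 1)) := by
    intro j
    set k : ℕ := j + n0 + 1 with hk
    have hk1 : 1 ≤ k := by omega
    have hkpos : (0:ℝ) < (k:ℝ) := by positivity
    have hkt0 : t0 ≤ (k:ℝ) := by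
      have h1 : t0 ≤ (⌈t0⌉₊ : ℝ) := Nat.le_ceil t0
      have h2 : (⌈t0⌉₊ : ℝ) ≤ (k:ℝ) := by exact_mod_cast Nat.le_of_lt_succ (by omega)
      linarith
    have hlogk : Real.log (k:ℝ) ≤ μ ^ 2 / 16 * (k:ℝ) := by
      apply log_le_mul_self (by positivity) hkpos
      have he : 2 / (μ ^ 2 / 16) = 32 / μ ^ 2 := by field_simp; ring
      have he2 : 1 / (μ ^ 2 / 16) = 16 / μ ^ 2 := by field_simp
      rw [he, he2]; exact hkt0
    have hthr : 2 * Real.sqrt (Real.log (k:ℝ) / (k:ℝ)) ≤ μ / 2 := by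
      have hq : Real.log (k:ℝ) / (k:ℝ) ≤ (μ / 4) ^ 2 := by
        rw [div_le_iff₀ hkpos]
        nlinarith [hlogk]
      calc 2 * Real.sqrt (Real.log (k:ℝ) / (k:ℝ))
          ≤ 2 * Real.sqrt ((μ / 4) ^ 2) :=
            mul_le_mul_of_nonneg_left (Real.sqrt_le_sqrt hq) (by norm_num)
        _ = 2 * (μ / 4) := by rw [Real.sqrt_sq (by positivity)]
        _ = μ / 2 := by ring
    have hsub : {ω | Xbar k ω < 2 * Real.sqrt (Real.log (k:ℕ) / (k:ℕ))}
        ⊆ {ω | Xbar k ω - μ ≤ -(μ / 2)} := by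
      intro ω hω
      simp only [Set.mem_setOf_eq] at hω ⊢
      have : Xbar k ω < μ / 2 := lt_of_lt_of_le hω hthr
      linarith
    have hc := hchernoff k hk1 (μ / 2) (by positivity)
    have hstep : f (j + n0) ≤ ENNReal.ofReal (Real.exp (-(k:ℝ) * (μ / 2) ^ 2 / 2)) := by
      have : f (j + n0) = P {ω | Xbar k ω < 2 * Real.sqrt (Real.log (k:ℕ) / (k:ℕ))} := by
        simp only [hf, hk]
      rw [this]
      exact le_trans (measure_mono hsub) hc
    refine hstep.trans (ENNReal.ofReal_le_ofReal ?_)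
    have hrex : r ^ (j + 1) = Real.exp ((j + 1 : ℕ) * (-x)) := by
      rw [Real.exp_nat_mul]
    rw [hrex]
    apply Real.exp_le_exp.mpr
    have hkj : (j + 1 : ℝ) ≤ (k : ℝ) := by
      have : (j + 1 : ℕ) ≤ k := by omega
      exact_mod_cast this
    have : -(k:ℝ) * (μ / 2) ^ 2 / 2 = (k : ℝ) * (-x) := by
      rw [hxdef]; ring
    rw [this]
    push_cast
    nlinarith [hx0, hkj]
  -- split the sum
  have hsplit : (∑ i ∈ Finset.range n0, f i) + (∑' j, f (j + n0)) = ∑' u, f u :=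
    Summable.sum_add_tsum_nat_add' ENNReal.summable
  have hhead : (∑ i ∈ Finset.range n0, f i) ≤ (n0 : ENNReal) := by
    calc (∑ i ∈ Finset.range n0, f i) ≤ ∑ _i ∈ Finset.range n0, 1 := by
          apply Finset.sum_le_sum
          intro i _
          exact prob_le_one
      _ = (n0 : ENNReal) := by simp
  have hsum_r : Summable (fun j : ℕ => r ^ (j + 1)) := by
    apply Summable.comp_injective (summable_geometric_of_lt_one hr0 hr1)
    exact fun a b h => by omega
  have htail : (∑' j, f (j + n0)) ≤ ENNReal.ofReal (8 / μ ^ 2) := by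
    calc (∑' j, f (j + n0)) ≤ ∑' j : ℕ, ENNReal.ofReal (r ^ (j + 1)) :=
          ENNReal.tsum_le_tsum hterm
      _ = ENNReal.ofReal (∑' j : ℕ, r ^ (j + 1)) :=
          (ENNReal.ofReal_tsum_of_nonneg (fun j => by positivity) hsum_r).symm
      _ ≤ ENNReal.ofReal (8 / μ ^ 2) := by
          apply ENNReal.ofReal_le_ofReal
          have hgeo : (∑' j : ℕ, r ^ (j + 1)) = r * (1 - r)⁻¹ := by
            have := tsum_geometric_of_lt_one hr0 hr1
            calc (∑' j : ℕ, r ^ (j + 1)) = ∑' j : ℕ, r * r ^ j := by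
                  congr 1; ext j; ring
              _ = r * ∑' j : ℕ, r ^ j := tsum_mul_left
              _ = r * (1 - r)⁻¹ := by rw [this]
          rw [hgeo]
          have h1r : 0 < 1 - r := by linarith
          have h8 : (8:ℝ) / μ ^ 2 = 1 / x := by rw [hxdef]; field_simp
          rw [h8, ← div_eq_mul_inv, div_le_div_iff₀ h1r hx0]
          have hexp : x + 1 ≤ Real.exp x := Real.add_one_le_exp x
          have h5 : r * (x + 1) ≤ r * Real.exp x := by
            apply mul_le_mul_of_nonneg_left hexp hr0
          have h6 : r * Real.exp x = 1 := by
            rw [hr, ← Real.exp_add]; simp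
          nlinarith
  calc (∑' u, f u) = (∑ i ∈ Finset.range n0, f i) + (∑' j, f (j + n0)) := hsplit.symm
    _ ≤ (n0 : ENNReal) + ENNReal.ofReal (8 / μ ^ 2) := add_le_add hhead htail
    _ = ENNReal.ofReal (n0 : ℝ) + ENNReal.ofReal (8 / μ ^ 2) := by
        rw [ENNReal.ofReal_natCast]
    _ ≤ ENNReal.ofReal (3 + t0 + 8 / μ ^ 2) := by
        rw [← ENNReal.ofReal_add (by positivity) (by positivity)]
        apply ENNReal.ofReal_le_ofReal
        have hn0le : (n0 : ℝ) ≤ 3 + t0 := by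
          rcases le_or_gt 0 t0 with h | h
          · have := Nat.ceil_lt_add_one h
            have : (n0 : ℝ) = (⌈t0⌉₊ : ℝ) + 1 := by push_cast [hn0]; ring
            have hc := Nat.ceil_lt_add_one h
            rw [this]
            linarith
          · have hceil : ⌈t0⌉₊ = 0 := Nat.ceil_eq_zero.mpr h.le
            have hn1 : (n0 : ℝ) = 1 := by rw [hn0, hceil]; norm_num
            -- t0 ≥ -2 : s * log s ≥ -1/e ≥ -1 with s = 16/μ²
            have hs : (0:ℝ) < 16 / μ ^ 2 := by positivity
            have hlog' : Real.log (μ ^ 2 / 16) ≤ μ ^ 2 / 16 / Real.exp 1 := by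
              have := Real.log_le_sub_one_of_pos
                (show (0:ℝ) < μ ^ 2 / 16 / Real.exp 1 by positivity)
              rw [Real.log_div (by positivity) (Real.exp_ne_zero 1), Real.log_exp] at this
              linarith
            have hloginv : Real.log (16 / μ ^ 2) = - Real.log (μ ^ 2 / 16) := by
              rw [← Real.log_inv]
              congr 1
              field_simp
            have he1 : (1:ℝ) < Real.exp 1 := by
              have := Real.add_one_le_exp (1:ℝ); linarith
            have ht0ge : -2 ≤ t0 := by
              rw [ht0, hloginv]
              have h2 : 32 / μ ^ 2 * (μ ^ 2 / 16 / Real.exp 1) = 2 / Real.exp 1 := by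
                field_simp; ring
              have h3 : 32 / μ ^ 2 * Real.log (μ ^ 2 / 16) ≤ 2 / Real.exp 1 := by
                calc 32 / μ ^ 2 * Real.log (μ ^ 2 / 16)
                    ≤ 32 / μ ^ 2 * (μ ^ 2 / 16 / Real.exp 1) := by
                      apply mul_le_mul_of_nonneg_left hlog' (by positivity)
                  _ = 2 / Real.exp 1 := h2
              have h4 : 2 / Real.exp 1 ≤ 2 := by
                rw [div_le_iff₀ (by positivity)]
                nlinarith
              linarith
            rw [hn1]; linarith
        linarith
    _ = ENNReal.ofReal (3 + 32 / μ ^ 2 * Real.log (16 / μ ^ 2) + 8 / μ ^ 2) := by rw [ht0]
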